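/- Let σ : G₁ × G₁ → ℂ be unit-circle valued and for a, b : G₁ → A define the σ-twisted convolution (a ⋆_σ b)(x) := ∫_{G₁} a(y) * β_y( b(y⁻¹x) ) * σ(y, y⁻¹x) dμ₁(y). For X ∈ G₂ define β̃_X[h](z) := β_X( h(z) ) * ṽ(X,z). Then for all f, g : G₁ → A such that the relevant integrands are Bochner integrable, and all x ∈ G₁: ( β̃_X[f] ⋆_σ β̃_X[g] )(x) = β̃_X[ f ⋆_{σ'} g ](x), where σ'(y,z) := φ(X,y,z)³ · σ(y,z). Hence β̃_X gives an isomorphism between the twisted crossed products with multipliers σ and varφ_X·σ, where varφ_X(y,z) = φ(X,y,z)³. -/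

import Mathlib

open MeasureTheory

lemma key_pointwise
    {A : Type*} [NormedRing A] [StarRing A] [CStarRing A] [NormedAlgebra ℂ A]
    [CompleteSpace A] [StarModule ℂ A]
    {G₁ G₂ : Type*} [CommGroup G₁] [CommGroup G₂]
    (β : G₁ × G₂ → (A ≃⋆ₐ[ℂ] A)) (v : G₁ × G₂ → G₁ × G₂ → unitary A)
    (htw : ∀ ξ η (a : A), β ξ (β η a) = (v ξ η : A) * β (ξ * η) a * star ((v ξ η : A)))
    (φ : G₁ × G₂ → G₁ × G₂ → G₁ × G₂ → ℂ)
    (hφabs : ∀ ξ η ζ, ‖φ ξ η ζ‖ = 1)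
    (hswap₁₂ : ∀ ξ η ζ, φ η ξ ζ = (φ ξ η ζ)⁻¹)
    (hswap₂₃ : ∀ ξ η ζ, φ ξ ζ η = (φ ξ η ζ)⁻¹)
    (hcoc : ∀ ξ η ζ, (v ξ η : A) * (v (ξ * η) ζ : A)
      = φ ξ η ζ • (β ξ ((v η ζ : A)) * (v ξ (η * ζ) : A)))
    (hv₁ : ∀ x y : G₁, v (x, 1) (y, 1) = 1)
    (vt : G₁ × G₂ → G₁ × G₂ → A)
    (hvt : ∀ ξ η, vt ξ η = (v ξ η : A) * star ((v η ξ : A)))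
    (X : G₂) (y z : G₁) (a b : A) (c : ℂ) :
    c • ((β ((1 : G₁), X) a * vt ((1 : G₁), X) (y, 1)) *
        β (y, 1) (β ((1 : G₁), X) b * vt ((1 : G₁), X) (z, 1)))
      = β ((1 : G₁), X)
          (((φ ((1 : G₁), X) (y, 1) (z, 1)) ^ (3 : ℕ) * c) • (a * β (y, 1) b))
        * vt ((1 : G₁), X) (y * z, 1) := by
  -- abbreviations
  set E : G₁ × G₂ := ((1 : G₁), X) with hE
  set Y : G₁ × G₂ := (y, 1) with hY
  set Z : G₁ × G₂ := (z, 1) with hZ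
  set φ₀ : ℂ := φ E Y Z with hφ₀
  have hEY : E * Y = (y, X) := by simp [hE, hY, Prod.mk_mul_mk]
  have hYE : Y * E = (y, X) := by simp [hE, hY, Prod.mk_mul_mk]
  have hYZ : Y * Z = (y * z, 1) := by simp [hY, hZ, Prod.mk_mul_mk]
  have hZE : Z * E = (z, X) := by simp [hE, hZ, Prod.mk_mul_mk]
  -- scalar facts
  have habs : ‖φ₀‖ = 1 := hφabs _ _ _
  have hne : φ₀ ≠ 0 := by
    intro h; rw [h] at habs; simp at habs
  have hconj : (starRingEnd ℂ) φ₀ = φ₀⁻¹ := by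
    have h1 : φ₀ * (starRingEnd ℂ) φ₀ = 1 := by
      rw [Complex.mul_conj, ← Complex.sq_norm, habs]; norm_num
    exact eq_inv_of_mul_eq_one_right h1
  have hconj' : (starRingEnd ℂ) (φ₀⁻¹) = φ₀ := by
    rw [map_inv₀, hconj, inv_inv]
  -- unitary cancellation helpers
  have KS : ∀ (e : unitary A), star (e : A) * (e : A) = 1 := fun e =>
    (Unitary.mem_iff.mp e.prop).1
  have KS' : ∀ (e : unitary A), (e : A) * star (e : A) = 1 := fun e =>
    (Unitary.mem_iff.mp e.prop).2
  have K1 : ∀ (e : unitary A) (t : A), star (e : A) * ((e : A) * t) = t := fun e t => by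
    rw [← mul_assoc, KS, one_mul]
  have K2 : ∀ (e : unitary A) (t : A), (e : A) * (star (e : A) * t) = t := fun e t => by
    rw [← mul_assoc, KS', one_mul]
  -- cocycle instances
  have c3 : (v E Y : A) * (v (y, X) Z : A) = φ₀ • (v E (y * z, 1) : A) := by
    have h := hcoc E Y Z
    rw [hEY, hYZ] at h
    rw [hY, hZ, hv₁] at h
    simpa using h
  have c1 : (v Y E : A) * (v (y, X) Z : A)
      = φ₀⁻¹ • (β Y (v E Z : A) * (v Y (z, X) : A)) := by
    have h := hcoc Y E Z
    rw [hYE] at h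
    have hEZ : E * Z = (z, X) := by simp [hE, hZ, Prod.mk_mul_mk]
    rw [hEZ] at h
    rw [hswap₁₂ E Y Z] at h
    exact h
  have c2 : (v (y * z, 1) E : A) = φ₀ • (β Y (v Z E : A) * (v Y (z, X) : A)) := by
    have h := hcoc Y Z E
    rw [hYZ, hZE] at h
    rw [hY, hZ] at h
    rw [hv₁] at h
    have hph : φ ((y,1) : G₁ × G₂) ((z,1) : G₁ × G₂) E = φ₀ := by
      rw [hswap₂₃, hswap₁₂, inv_inv, hφ₀, hY, hZ]
    rw [hph] at h
    simpa [← hY, ← hZ] using h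
  -- derived identities
  have hm : (v (y, X) Z : A) = φ₀ • (star (v E Y : A) * (v E (y * z, 1) : A)) := by
    have := congrArg (fun t => star (v E Y : A) * t) c3
    simp only [mul_smul_comm] at this
    rw [← mul_assoc] at this
    rw [KS, one_mul] at this
    exact this
  have e1 : β Y (v E Z : A) * (v Y (z, X) : A) = φ₀ • ((v Y E : A) * (v (y, X) Z : A)) := by
    rw [c1, smul_smul, mul_inv_cancel₀ hne, one_smul]
  have hβr : β Y (v E Z : A)
      = φ₀ • (((v Y E : A) * (v (y, X) Z : A)) * star (v Y (z, X) : A)) := by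
    have := congrArg (fun t => t * star (v Y (z, X) : A)) e1
    simp only [smul_mul_assoc] at this
    rw [mul_assoc, KS', mul_one] at this
    exact this
  have hβs : β Y (star (v Z E : A))
      = φ₀ • ((v Y (z, X) : A) * star (v (y * z, 1) E : A)) := by
    have hs : β Y (v Z E : A) = φ₀⁻¹ • ((v (y * z, 1) E : A) * star (v Y (z, X) : A)) := by
      have := congrArg (fun t => t * star (v Y (z, X) : A)) c2
      simp only [smul_mul_assoc] at this
      rw [mul_assoc, KS', mul_one] at this
      rw [this, smul_smul, inv_mul_cancel₀ hne, one_smul]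
    have := congrArg star hs
    rw [← map_star] at this
    rw [this, star_smul, star_mul, star_star]
    simp only [Complex.star_def, map_inv₀, hconj, inv_inv]
  have hβvt : β Y (vt E Z)
      = (φ₀ * φ₀ * φ₀) • (((v Y E : A) * star (v E Y : A)) *
          ((v E (y * z, 1) : A) * star (v (y * z, 1) E : A))) := by
    rw [hvt, map_mul, hβr, hβs, hm]
    simp only [smul_mul_assoc, mul_smul_comm, smul_smul, mul_assoc, K1, K2]
  -- the two double-action identities
  have htwEY : β E (β Y b) = (v E Y : A) * β (y, X) b * star (v E Y : A) := by
    rw [htw E Y b, hEY]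
  have htwYE : β Y (β E b) = (v Y E : A) * β (y, X) b * star (v Y E : A) := by
    rw [htw Y E b, hYE]
  -- assemble
  rw [_root_.map_smul, map_mul, map_mul, htwYE, hβvt, htwEY, hvt E Y, hvt E (y*z,1)]
  simp only [smul_mul_assoc, mul_smul_comm, smul_smul, mul_assoc, K1, K2]
  congr 1
  ring

/-- **setting of Theorem 8.1.**  With `(β, v, φ, ṽ)` as in Theorem 8.1 and
`G₁` locally compact with Haar measure `μ₁`, let `σ` be a unit-circle-valued multiplier
on `G₁` and define the `σ`-twisted convolution
`(a ⋆_σ b)(x) := ∫ a(y) β_y(b(y⁻¹x)) σ(y,y⁻¹x) dμ₁(y)` and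
`β̃_X[h](z) := β_X(h(z)) ṽ(X,z)`.  Then for integrable data,
`(β̃_X[f] ⋆_σ β̃_X[g])(x) = β̃_X[f ⋆_{σ'} g](x)` where `σ'(y,z) = φ(X,y,z)³ σ(y,z)`:
`β̃_X` gives an isomorphism between the twisted crossed products with multipliers `σ`
and `varφ_X·σ`. -/
theorem beta_tilde_intertwines_multipliers
    {A : Type*} [NormedRing A] [StarRing A] [CStarRing A] [NormedAlgebra ℂ A]
    [CompleteSpace A] [StarModule ℂ A]
    {G₁ G₂ : Type*} [CommGroup G₁] [CommGroup G₂]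
    (β : G₁ × G₂ → (A ≃⋆ₐ[ℂ] A)) (v : G₁ × G₂ → G₁ × G₂ → unitary A)
    (htw : ∀ ξ η (a : A), β ξ (β η a) = (v ξ η : A) * β (ξ * η) a * star ((v ξ η : A)))
    (φ : G₁ × G₂ → G₁ × G₂ → G₁ × G₂ → ℂ)
    (hφabs : ∀ ξ η ζ, ‖φ ξ η ζ‖ = 1)
    (hmul₁ : ∀ ξ ξ' η ζ, φ (ξ * ξ') η ζ = φ ξ η ζ * φ ξ' η ζ)
    (hmul₂ : ∀ ξ η η' ζ, φ ξ (η * η') ζ = φ ξ η ζ * φ ξ η' ζ)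
    (hmul₃ : ∀ ξ η ζ ζ', φ ξ η (ζ * ζ') = φ ξ η ζ * φ ξ η ζ')
    (hswap₁₂ : ∀ ξ η ζ, φ η ξ ζ = (φ ξ η ζ)⁻¹)
    (hswap₂₃ : ∀ ξ η ζ, φ ξ ζ η = (φ ξ η ζ)⁻¹)
    (hcoc : ∀ ξ η ζ, (v ξ η : A) * (v (ξ * η) ζ : A)
      = φ ξ η ζ • (β ξ ((v η ζ : A)) * (v ξ (η * ζ) : A)))
    (hv₁ : ∀ x y : G₁, v (x, 1) (y, 1) = 1)
    (hv₂ : ∀ X Y : G₂, v ((1 : G₁), X) (1, Y) = 1)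
    (hφG₁ : ∀ x y z : G₁, φ (x, 1) (y, 1) (z, 1) = 1)
    (hφG₂ : ∀ (ξ : G₁ × G₂) (X Y : G₂),
      φ ξ ((1 : G₁), X) (1, Y) = 1 ∧ φ ((1 : G₁), X) ξ (1, Y) = 1 ∧
        φ ((1 : G₁), X) ((1 : G₁), Y) ξ = 1)
    (vt : G₁ × G₂ → G₁ × G₂ → A)
    (hvt : ∀ ξ η, vt ξ η = (v ξ η : A) * star ((v η ξ : A)))
    [TopologicalSpace G₁] [IsTopologicalGroup G₁] [LocallyCompactSpace G₁]
    [MeasurableSpace G₁] [BorelSpace G₁]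
    (μ₁ : Measure G₁) [μ₁.IsHaarMeasure]
    (σ : G₁ → G₁ → ℂ) (hσ : ∀ y z, ‖σ y z‖ = 1)
    (X : G₂) (f g : G₁ → A) (x : G₁)
    (hint₁ : Integrable (fun y => σ y (y⁻¹ * x) •
      ((β ((1 : G₁), X) (f y) * vt ((1 : G₁), X) (y, 1)) *
        β (y, 1) (β ((1 : G₁), X) (g (y⁻¹ * x)) * vt ((1 : G₁), X) (y⁻¹ * x, 1)))) μ₁)
    (hint₂ : Integrable (fun y =>
      ((φ ((1 : G₁), X) (y, 1) (y⁻¹ * x, 1)) ^ (3 : ℕ) * σ y (y⁻¹ * x)) •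
        (f y * β (y, 1) (g (y⁻¹ * x)))) μ₁) :
    ∫ y, σ y (y⁻¹ * x) •
        ((β ((1 : G₁), X) (f y) * vt ((1 : G₁), X) (y, 1)) *
          β (y, 1) (β ((1 : G₁), X) (g (y⁻¹ * x)) * vt ((1 : G₁), X) (y⁻¹ * x, 1))) ∂μ₁
      = β ((1 : G₁), X)
          (∫ y, ((φ ((1 : G₁), X) (y, 1) (y⁻¹ * x, 1)) ^ (3 : ℕ) * σ y (y⁻¹ * x)) •
            (f y * β (y, 1) (g (y⁻¹ * x))) ∂μ₁)
        * vt ((1 : G₁), X) (x, 1) := by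
  have hcont : Continuous (β ((1 : G₁), X)) := by
    letI : NonUnitalCStarAlgebra A :=
      { (inferInstance : NonUnitalNormedRing A), ‹StarRing A›, ‹CompleteSpace A›, ‹CStarRing A›,
        (inferInstance : NormedSpace ℂ A), (inferInstance : IsScalarTower ℂ A A),
        (inferInstance : SMulCommClass ℂ A A), ‹StarModule ℂ A› with }
    exact (StarAlgEquiv.isometry (β ((1 : G₁), X))).continuous
  let L : A →L[ℂ] A :=
    { toFun := fun a => β ((1 : G₁), X) a * vt ((1 : G₁), X) (x, 1)
      map_add' := fun a b => by simp [map_add, add_mul]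
      map_smul' := fun c a => by simp [_root_.map_smul, smul_mul_assoc]
      cont := hcont.mul continuous_const }
  have hfun : (fun y => σ y (y⁻¹ * x) •
        ((β ((1 : G₁), X) (f y) * vt ((1 : G₁), X) (y, 1)) *
          β (y, 1) (β ((1 : G₁), X) (g (y⁻¹ * x)) * vt ((1 : G₁), X) (y⁻¹ * x, 1))))
      = fun y => L (((φ ((1 : G₁), X) (y, 1) (y⁻¹ * x, 1)) ^ (3 : ℕ) * σ y (y⁻¹ * x)) •
          (f y * β (y, 1) (g (y⁻¹ * x)))) := by
    funext y
    have h := key_pointwise β v htw φ hφabs hswap₁₂ hswap₂₃ hcoc hv₁ vt hvt X y (y⁻¹ * x)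
      (f y) (g (y⁻¹ * x)) (σ y (y⁻¹ * x))
    rw [mul_inv_cancel_left] at h
    exact h
  rw [hfun, L.integral_comp_comm hint₂]
  rfl
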